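/- Let p(x) = (1/√(2π))·e^{−x²/2} be the standard Gaussian density on ℝ. There exists an absolute constant C > 0 such that for every ε > 0 there exists a probability density q on ℝ satisfying: (1) ln q is C¹ and (ln q)′ is C-Lipschitz; (2) ∫ ((ln p)′(x) − (ln q)′(x))² p(x) dx < ε; (3) TV(p, q) > 1 − ε. In particular, the stationary distribution of Langevin dynamics run with the score estimate (ln q)′, which is q, can be arbitrarily far in total variation from p even though the score estimate is ε-accurate in L²(p). -/

import Mathlib

open MeasureTheory ProbabilityTheory Real
open scoped ENNReal NNReal

noncomputable section

/-- The measure on `ℝ` with Lebesgue density `p`. -/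
def densMeasureR (p : ℝ → ℝ) : Measure ℝ :=
  volume.withDensity fun x => ENNReal.ofReal (p x)

/-- `p` is a probability density on `ℝ`. -/
def IsDensityR (p : ℝ → ℝ) : Prop :=
  (∀ x, 0 ≤ p x) ∧ (∫ x, p x = 1)

/-- Total variation distance between measures on `ℝ`. -/
def TVdistR (μ ν : Measure ℝ) : ℝ :=
  ⨆ A : { A : Set ℝ // MeasurableSet A }, |(μ A.1).toReal - (ν A.1).toReal|

/-- The standard Gaussian density on `ℝ`. -/
def stdNormalDensity : ℝ → ℝ :=
  fun x => (Real.sqrt (2 * Real.pi))⁻¹ * Real.exp (-x ^ 2 / 2)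

namespace LMCAux

open Set

def relu (t : ℝ) : ℝ := (t + |t|) / 2

lemma relu_nonneg (t : ℝ) : 0 ≤ relu t := by
  have := neg_abs_le t; unfold relu; linarith
lemma relu_of_nonpos {t : ℝ} (h : t ≤ 0) : relu t = 0 := by
  unfold relu; rw [abs_of_nonpos h]; ring
lemma relu_of_nonneg {t : ℝ} (h : 0 ≤ t) : relu t = t := by
  unfold relu; rw [abs_of_nonneg h]; ring
lemma relu_mono : Monotone relu := by
  intro a b hab
  rcases le_or_gt b 0 with hb | hb
  · rw [relu_of_nonpos (hab.trans hb), relu_of_nonpos hb]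
  rcases le_or_gt a 0 with ha | ha
  · rw [relu_of_nonpos ha, relu_of_nonneg hb.le]; exact hb.le
  · rw [relu_of_nonneg ha.le, relu_of_nonneg hb.le]; exact hab
lemma relu_lip (a b : ℝ) : |relu a - relu b| ≤ |a - b| := by
  unfold relu
  have h := abs_abs_sub_abs_le_abs_sub a b
  obtain ⟨h1, h2'⟩ := abs_le.mp h
  have h3 := neg_abs_le (a - b)
  have h4 := le_abs_self (a - b)
  rw [abs_le]
  constructor <;> linarith

lemma continuous_relu : Continuous relu :=
  (continuous_id.add continuous_abs).div_const 2

def sq2 (t : ℝ) : ℝ := relu t ^ 2 / 2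

lemma sq2_nonneg (t : ℝ) : 0 ≤ sq2 t := by unfold sq2; positivity
lemma sq2_mono : Monotone sq2 := fun a b hab => by
  unfold sq2
  have := relu_nonneg a
  have := relu_mono hab
  nlinarith
lemma sq2_of_nonpos {t : ℝ} (h : t ≤ 0) : sq2 t = 0 := by
  unfold sq2; rw [relu_of_nonpos h]; norm_num
lemma sq2_of_nonneg {t : ℝ} (h : 0 ≤ t) : sq2 t = t ^ 2 / 2 := by
  unfold sq2; rw [relu_of_nonneg h]

lemma hasDerivAt_sq2 (t : ℝ) : HasDerivAt sq2 (relu t) t := by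
  rcases lt_trichotomy t 0 with ht | ht | ht
  · have : sq2 =ᶠ[nhds t] fun _ => (0 : ℝ) := by
      filter_upwards [Iio_mem_nhds ht] with s hs
      exact sq2_of_nonpos (le_of_lt hs)
    rw [relu_of_nonpos ht.le]
    exact (hasDerivAt_const t (0:ℝ)).congr_of_eventuallyEq this
  · subst ht
    rw [relu_of_nonpos le_rfl]
    rw [hasDerivAt_iff_tendsto_slope]
    have hb : ∀ s : ℝ, ‖slope sq2 0 s‖ ≤ |s| := by
      intro s
      rw [slope_def_field]
      rcases eq_or_ne s 0 with rfl | hs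
      · simp
      · rw [sq2_of_nonpos le_rfl, sub_zero, sub_zero]
        have h1 : |relu s| ≤ |s| := by
          have := relu_lip s 0
          simpa [relu_of_nonpos le_rfl] using this
        rw [norm_div]
        rw [div_le_iff₀ (by simpa using hs : (0:ℝ) < ‖s‖)]
        have : ‖sq2 s‖ ≤ |s| * |s| / 2 := by
          rw [sq2, norm_div]
          simp only [norm_pow, Real.norm_eq_abs]
          have : |relu s| ^ 2 ≤ |s| * |s| := by nlinarith [abs_nonneg (relu s)]
          simp only [abs_two]
          nlinarith
        calc ‖sq2 s‖ ≤ |s| * |s| / 2 := this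
          _ ≤ |s| * ‖s‖ := by rw [Real.norm_eq_abs]; nlinarith [abs_nonneg s]
    refine squeeze_zero_norm hb ?_
    have : Filter.Tendsto (fun s : ℝ => |s|) (nhds 0) (nhds 0) := by
      simpa using continuous_abs.tendsto (0:ℝ)
    exact this.mono_left nhdsWithin_le_nhds
  · have : sq2 =ᶠ[nhds t] fun s => s ^ 2 / 2 := by
      filter_upwards [Ioi_mem_nhds ht] with s hs
      exact sq2_of_nonneg (le_of_lt hs)
    rw [relu_of_nonneg ht.le]
    have hd : HasDerivAt (fun s : ℝ => s ^ 2 / 2) t t := by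
      have := (hasDerivAt_pow 2 t).div_const 2
      simpa using this
    exact hd.congr_of_eventuallyEq this

/-! ### The tilted density -/

def hfun (R x : ℝ) : ℝ := 3 * (sq2 (x - R) - sq2 (x - 3 * R))
def sfun (R x : ℝ) : ℝ := 3 * (relu (x - R) - relu (x - 3 * R))
def ffun (R : ℝ) : ℝ → ℝ := fun x => Real.exp (-x ^ 2 / 2 + hfun R x)

lemma hasDerivAt_hfun (R x : ℝ) : HasDerivAt (hfun R) (sfun R x) x := by
  have h1 : HasDerivAt (fun x : ℝ => sq2 (x - R)) (relu (x - R)) x := by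
    have := (hasDerivAt_sq2 (x - R)).comp x ((hasDerivAt_id x).sub_const R)
    simpa [Function.comp_def] using this
  have h2 : HasDerivAt (fun x : ℝ => sq2 (x - 3 * R)) (relu (x - 3 * R)) x := by
    have := (hasDerivAt_sq2 (x - 3 * R)).comp x ((hasDerivAt_id x).sub_const (3 * R))
    simpa [Function.comp_def] using this
  have := (h1.sub h2).const_mul (3:ℝ)
  exact (show HasDerivAt (fun y => 3 * (sq2 (y - R) - sq2 (y - 3 * R))) (sfun R x) x by
    simpa [sfun] using this)

lemma continuous_sfun (R : ℝ) : Continuous (sfun R) := by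
  unfold sfun
  exact continuous_const.mul ((continuous_relu.comp (continuous_id.sub continuous_const)).sub
    (continuous_relu.comp (continuous_id.sub continuous_const)))

lemma continuous_hfun (R : ℝ) : Continuous (hfun R) :=
  Differentiable.continuous fun x => (hasDerivAt_hfun R x).differentiableAt

lemma continuous_ffun (R : ℝ) : Continuous (ffun R) :=
  Real.continuous_exp.comp (((continuous_pow 2).neg.div_const 2).add (continuous_hfun R))

lemma ffun_pos (R x : ℝ) : 0 < ffun R x := Real.exp_pos _

variable {R : ℝ}

lemma hfun_eq0 (hR : 0 ≤ R) {x : ℝ} (hx : x ≤ R) : hfun R x = 0 := by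
  unfold hfun
  rw [sq2_of_nonpos (by linarith), sq2_of_nonpos (by linarith)]
  ring

lemma hfun_mid (hR : 0 ≤ R) {x : ℝ} (hx1 : R ≤ x) (hx2 : x ≤ 3 * R) :
    hfun R x = 3 / 2 * (x - R) ^ 2 := by
  unfold hfun
  rw [sq2_of_nonneg (by linarith), sq2_of_nonpos (by linarith)]
  ring

lemma hfun_far (hR : 0 ≤ R) {x : ℝ} (hx : 3 * R ≤ x) :
    hfun R x = 6 * R * x - 12 * R ^ 2 := by
  unfold hfun
  rw [sq2_of_nonneg (by linarith), sq2_of_nonneg (by linarith)]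
  ring

lemma hfun_le (hR : 0 ≤ R) {x : ℝ} (hx : x ≤ 3 * R) : hfun R x ≤ 6 * R ^ 2 := by
  unfold hfun
  have h1 : sq2 (x - R) ≤ sq2 (2 * R) := sq2_mono (by linarith)
  have h2 : 0 ≤ sq2 (x - 3 * R) := sq2_nonneg _
  rw [sq2_of_nonneg (show (0:ℝ) ≤ 2 * R by linarith)] at h1
  nlinarith

lemma ffun_le (hR : 0 ≤ R) (x : ℝ) :
    ffun R x ≤ Real.exp (6 * R ^ 2) *
      (Real.exp (-(1/2) * x ^ 2) + Real.exp (-(1/2) * (x - 6 * R) ^ 2)) := by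
  rcases le_or_gt x (3 * R) with hx | hx
  · have h1 : ffun R x ≤ Real.exp (6 * R ^ 2) * Real.exp (-(1/2) * x ^ 2) := by
      rw [ffun, ← Real.exp_add]
      exact Real.exp_le_exp.mpr (by have := hfun_le hR hx; linarith)
    have h2 : 0 < Real.exp (6 * R ^ 2) * Real.exp (-(1/2) * (x - 6 * R) ^ 2) := by positivity
    linarith
  · have h1 : ffun R x = Real.exp (6 * R ^ 2) * Real.exp (-(1/2) * (x - 6 * R) ^ 2) := by
      rw [ffun, ← Real.exp_add, hfun_far hR hx.le]
      congr 1
      ring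
    have h2 : 0 < Real.exp (6 * R ^ 2) * Real.exp (-(1/2) * x ^ 2) := by positivity
    linarith

lemma integrable_ffun (hR : 0 ≤ R) : Integrable (ffun R) := by
  have hg : Integrable (fun x : ℝ => Real.exp (-(1/2) * x ^ 2)) :=
    integrable_exp_neg_mul_sq (by norm_num)
  have hG : Integrable (fun x : ℝ => Real.exp (6 * R ^ 2) *
      (Real.exp (-(1/2) * x ^ 2) + Real.exp (-(1/2) * (x - 6 * R) ^ 2))) :=
    ((hg.add (hg.comp_sub_right (6 * R)))).const_mul _
  refine hG.mono (continuous_ffun R).aestronglyMeasurable ?_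
  refine Filter.Eventually.of_forall fun x => ?_
  rw [Real.norm_eq_abs, Real.norm_eq_abs, abs_of_nonneg (ffun_pos R x).le,
    abs_of_nonneg (by positivity)]
  exact ffun_le hR x

lemma continuous_std : Continuous stdNormalDensity := by
  unfold stdNormalDensity
  exact continuous_const.mul (Real.continuous_exp.comp ((continuous_pow 2).neg.div_const 2))

lemma std_nonneg (x : ℝ) : 0 ≤ stdNormalDensity x := by
  unfold stdNormalDensity; positivity

lemma std_eq : stdNormalDensity = fun x => (Real.sqrt (2 * π))⁻¹ * Real.exp (-(1/2) * x ^ 2) := by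
  funext x
  rw [stdNormalDensity, show -x ^ 2 / 2 = -(1/2) * x ^ 2 by ring]

lemma integrable_std : Integrable stdNormalDensity := by
  rw [std_eq]
  exact (integrable_exp_neg_mul_sq (by norm_num)).const_mul _

lemma densMeasure_apply_toReal {g : ℝ → ℝ} (hg : Integrable g) (h0 : ∀ x, 0 ≤ g x)
    {A : Set ℝ} (hA : MeasurableSet A) :
    ((densMeasureR g) A).toReal = ∫ x in A, g x := by
  rw [densMeasureR, withDensity_apply _ hA]
  rw [← ofReal_integral_eq_lintegral_ofReal hg.integrableOn
      (Filter.Eventually.of_forall fun x => h0 x)]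
  exact ENNReal.toReal_ofReal (integral_nonneg fun x => h0 x)

lemma densMeasure_lt_top {g : ℝ → ℝ} (hg : Integrable g) (h0 : ∀ x, 0 ≤ g x)
    (A : Set ℝ) : (densMeasureR g) A ≠ ⊤ := by
  refine ne_top_of_le_ne_top ?_ (measure_mono (subset_univ A))
  rw [densMeasureR, withDensity_apply _ MeasurableSet.univ, Measure.restrict_univ]
  rw [← ofReal_integral_eq_lintegral_ofReal hg (Filter.Eventually.of_forall fun x => h0 x)]
  exact ENNReal.ofReal_ne_top

lemma exp_half_le_two : Real.exp (1/2) ≤ 2 := by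
  have h : Real.exp (1/2) * Real.exp (1/2) = Real.exp 1 := by
    rw [← Real.exp_add]; norm_num
  nlinarith [Real.exp_one_lt_d9, Real.exp_pos (1/2:ℝ)]

lemma one_le_sqrt_two_pi : 1 ≤ Real.sqrt (2 * π) := by
  rw [show (1:ℝ) = Real.sqrt 1 by simp]
  exact Real.sqrt_le_sqrt (by nlinarith [Real.pi_gt_three])

lemma sqrt_two_pi_le_three : Real.sqrt (2 * π) ≤ 3 := by
  rw [show (3:ℝ) = Real.sqrt 9 by rw [show (9:ℝ) = 3 ^ 2 by norm_num, Real.sqrt_sq]; norm_num]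
  exact Real.sqrt_le_sqrt (by nlinarith [Real.pi_lt_d2])

end LMCAux

open LMCAux Set

set_option maxHeartbeats 2000000 in
/-- The stationary distribution of Langevin dynamics with an `L²(p)`-accurate score
estimate can be arbitrarily far from `p` in total variation. -/
theorem lmc_stationary_far :
    ∃ C : ℝ, 0 < C ∧
      ∀ ε : ℝ, 0 < ε →
        ∃ q : ℝ → ℝ, IsDensityR q ∧ (∀ x, 0 < q x) ∧
          ContDiff ℝ 1 (fun x => Real.log (q x)) ∧
          LipschitzWith (Real.toNNReal C) (deriv fun x => Real.log (q x)) ∧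
          (∫ x, (deriv (fun y => Real.log (stdNormalDensity y)) x -
                deriv (fun y => Real.log (q y)) x) ^ 2 * stdNormalDensity x) < ε ∧
          1 - ε < TVdistR (densMeasureR stdNormalDensity) (densMeasureR q) := by
  refine ⟨7, by norm_num, fun ε hε => ?_⟩
  set R : ℝ := max 4 (1 + Real.log (36 / ε)) with hRdef
  have hR4 : (4:ℝ) ≤ R := le_max_left _ _
  have hR0 : (0:ℝ) ≤ R := by linarith
  have hexpR : Real.exp (-R) < ε / 36 := by
    have h1 : Real.exp (-R) ≤ Real.exp (-(1 + Real.log (36 / ε))) :=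
      Real.exp_le_exp.mpr (by simp [hRdef])
    have h2 : Real.exp (-(1 + Real.log (36 / ε))) = Real.exp (-1) * (ε / 36) := by
      rw [show -(1 + Real.log (36 / ε)) = -1 + -Real.log (36/ε) by ring, Real.exp_add,
        Real.exp_neg (Real.log _), Real.exp_log (by positivity)]
      rw [inv_div]
    have h3 : Real.exp (-1) < 1 := Real.exp_lt_one_iff.mpr (by norm_num)
    have h4 : (0:ℝ) < ε / 36 := by positivity
    calc Real.exp (-R) ≤ Real.exp (-1) * (ε / 36) := h2 ▸ h1
      _ < 1 * (ε / 36) := by nlinarith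
      _ = ε / 36 := by ring
  set f := ffun R with hfdef
  have hint_f : Integrable f := integrable_ffun hR0
  set Z := ∫ x, f x with hZdef
  set I_A := ∫ x in Ici (3 * R), f x with hIAdef
  set I_B := ∫ x in Iio (3 * R), f x with hIBdef
  have hsplit : I_B + I_A = Z :=
    intervalIntegral.integral_Iio_add_Ici hint_f.integrableOn hint_f.integrableOn
  have hIB0 : 0 ≤ I_B := setIntegral_nonneg measurableSet_Iio fun x _ => (ffun_pos R x).le
  -- lower bound on I_A
  have hIA_lb : Real.exp (6 * R ^ 2) ≤ I_A := by
    have hconst : ∀ x ∈ Icc (6 * R - 1) (6 * R + 1), Real.exp (6 * R ^ 2 - 1/2) ≤ f x := by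
      intro x hx
      obtain ⟨hx1, hx2⟩ := hx
      have h3Rx : 3 * R ≤ x := by nlinarith
      show Real.exp (6 * R ^ 2 - 1/2) ≤ Real.exp (-x ^ 2 / 2 + hfun R x)
      rw [hfun_far hR0 h3Rx]
      exact Real.exp_le_exp.mpr (by nlinarith)
    have h1 := setIntegral_ge_of_const_le measurableSet_Icc
      (by rw [Real.volume_Icc]; exact ENNReal.ofReal_ne_top) hconst hint_f.integrableOn
    have hvol : (volume (Icc (6 * R - 1) (6 * R + 1))).toReal = 2 := by
      rw [Real.volume_Icc, ENNReal.toReal_ofReal (by linarith)]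
      ring
    rw [measureReal_def, hvol, smul_eq_mul] at h1
    have h2 : (∫ x in Icc (6 * R - 1) (6 * R + 1), f x) ≤ I_A := by
      refine setIntegral_mono_set hint_f.integrableOn
        (Filter.Eventually.of_forall fun x => (ffun_pos R x).le)
        (Filter.Eventually.of_forall ?_)
      intro x hx
      obtain ⟨hx1, hx2⟩ := hx
      show 3 * R ≤ x
      nlinarith
    have h3 : Real.exp (6 * R ^ 2) ≤ Real.exp (6 * R ^ 2 - 1/2) * 2 := by
      rw [show (6 * R ^ 2 - 1/2 : ℝ) = 6 * R ^ 2 + -(1/2) by ring, Real.exp_add]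
      have h4 : 1 ≤ Real.exp (-(1/2:ℝ)) * 2 := by
        rw [Real.exp_neg, ← div_eq_inv_mul, le_div_iff₀ (Real.exp_pos _)]
        have h5 := exp_half_le_two
        linarith
      nlinarith [Real.exp_pos (6 * R ^ 2)]
    linarith
  have hIA0 : 0 < I_A := lt_of_lt_of_le (Real.exp_pos _) hIA_lb
  have hZpos : 0 < Z := by rw [← hsplit]; linarith
  -- upper bound on I_B
  have hIB_ub : I_B ≤ Real.sqrt (2 * π) + 2 * R * Real.exp (3/2 * R ^ 2) := by
    set D : ℝ → ℝ := fun x => Real.exp (-(1/2) * x ^ 2) +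
      indicator (Icc R (3 * R)) (fun _ => Real.exp (3/2 * R ^ 2)) x with hDdef
    have hD_int : Integrable D := by
      refine (integrable_exp_neg_mul_sq (by norm_num)).add ?_
      rw [integrable_indicator_iff measurableSet_Icc]
      exact integrableOn_const (by rw [Real.volume_Icc]; exact ENNReal.ofReal_ne_top)
    have hfD : ∀ x ∈ Iio (3 * R), f x ≤ D x := by
      intro x hx
      have hx3 : x < 3 * R := hx
      rcases le_or_gt x R with hxR | hxR
      · have : f x = Real.exp (-(1/2) * x ^ 2) := by
          show Real.exp (-x ^ 2 / 2 + hfun R x) = _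
          rw [hfun_eq0 hR0 hxR]
          congr 1; ring
        rw [this, hDdef]
        have := indicator_nonneg (fun (_ : ℝ) _ => (Real.exp_pos (3/2 * R ^ 2)).le)
          (s := Icc R (3 * R)) x
        simp only []
        linarith
      · have hmem : x ∈ Icc R (3 * R) := ⟨hxR.le, hx3.le⟩
        have hval : f x = Real.exp (-x ^ 2 / 2 + 3/2 * (x - R) ^ 2) := by
          show Real.exp (-x ^ 2 / 2 + hfun R x) = _
          rw [hfun_mid hR0 hxR.le hx3.le]
        have hle : f x ≤ Real.exp (3/2 * R ^ 2) := by
          rw [hval]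
          exact Real.exp_le_exp.mpr (by nlinarith)
        rw [hDdef]
        simp only [indicator_of_mem hmem]
        have : 0 < Real.exp (-(1/2) * x ^ 2) := Real.exp_pos _
        linarith
    have h1 : I_B ≤ ∫ x in Iio (3 * R), D x :=
      setIntegral_mono_on hint_f.integrableOn hD_int.integrableOn measurableSet_Iio hfD
    have h2 : (∫ x in Iio (3 * R), D x) ≤ ∫ x, D x := by
      refine setIntegral_le_integral hD_int (Filter.Eventually.of_forall fun x => ?_)
      rw [hDdef]
      have := indicator_nonneg (fun (_ : ℝ) _ => (Real.exp_pos (3/2 * R ^ 2)).le)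
        (s := Icc R (3 * R)) x
      have := Real.exp_pos (-(1/2) * x ^ 2)
      simp only [Pi.zero_apply]
      linarith
    have h3 : (∫ x, D x) = Real.sqrt (2 * π) + 2 * R * Real.exp (3/2 * R ^ 2) := by
      rw [hDdef]
      rw [integral_add (integrable_exp_neg_mul_sq (by norm_num))
        (by rw [integrable_indicator_iff measurableSet_Icc]
            exact integrableOn_const (by rw [Real.volume_Icc]; exact ENNReal.ofReal_ne_top))]
      rw [integral_gaussian, show π / (1/2) = 2 * π by ring]
      rw [integral_indicator_const _ measurableSet_Icc]
      rw [measureReal_def, Real.volume_Icc, ENNReal.toReal_ofReal (by linarith), smul_eq_mul]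
      ring_nf
    linarith
  -- the candidate density
  refine ⟨fun x => f x / Z, ⟨fun x => div_nonneg (ffun_pos R x).le hZpos.le, ?_⟩,
    fun x => div_pos (ffun_pos R x) hZpos, ?_, ?_, ?_, ?_⟩
  · rw [integral_div, ← hZdef, div_self hZpos.ne']
  -- log q as a nice function
  all_goals
    have hlogq : (fun x => Real.log (f x / Z)) =
        fun x => (-x ^ 2 / 2 + hfun R x) - Real.log Z := by
      funext x
      rw [Real.log_div (ffun_pos R x).ne' hZpos.ne']
      show Real.log (Real.exp (-x ^ 2 / 2 + hfun R x)) - Real.log Z = _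
      rw [Real.log_exp]
  · -- ContDiff
    rw [hlogq]
    have hh : ContDiff ℝ 1 (hfun R) := by
      rw [contDiff_one_iff_deriv]
      refine ⟨fun x => (hasDerivAt_hfun R x).differentiableAt, ?_⟩
      have : deriv (hfun R) = sfun R := funext fun x => (hasDerivAt_hfun R x).deriv
      rw [this]
      exact continuous_sfun R
    exact (((contDiff_id.pow 2).neg.div_const 2).add hh).sub contDiff_const
  all_goals
    have hscore : deriv (fun x => Real.log (f x / Z)) = fun x => -x + sfun R x := by
      funext x
      rw [hlogq]
      have hp : HasDerivAt (fun x : ℝ => -x ^ 2 / 2) (-x) x := by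
        have := ((hasDerivAt_pow 2 x).neg).div_const 2
        simp only [Nat.cast_ofNat, pow_one] at this
        exact this.congr_deriv (by norm_num; ring)
      exact ((hp.add (hasDerivAt_hfun R x)).sub_const _).deriv
  · -- Lipschitz
    rw [hscore]
    refine LipschitzWith.of_dist_le_mul fun a b => ?_
    rw [Real.dist_eq, Real.dist_eq, Real.coe_toNNReal 7 (by norm_num)]
    have l1 := relu_lip (a - R) (b - R)
    have l2 := relu_lip (a - 3 * R) (b - 3 * R)
    rw [show a - R - (b - R) = a - b by ring] at l1
    rw [show a - 3 * R - (b - 3 * R) = a - b by ring] at l2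
    obtain ⟨l1a, l1b⟩ := abs_le.mp l1
    obtain ⟨l2a, l2b⟩ := abs_le.mp l2
    have h3 := neg_abs_le (a - b)
    have h4 := le_abs_self (a - b)
    rw [abs_le]
    unfold sfun
    constructor <;> [skip; skip] <;> nlinarith [abs_nonneg (a - b)]
  · -- score error
    have hp_deriv : deriv (fun y => Real.log (stdNormalDensity y)) = fun x : ℝ => -x := by
      have heq : (fun y => Real.log (stdNormalDensity y)) =
          fun y => Real.log ((Real.sqrt (2 * π))⁻¹) + -y ^ 2 / 2 := by
        funext y
        rw [stdNormalDensity, Real.log_mul (inv_ne_zero (by positivity)) (Real.exp_ne_zero _),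
          Real.log_exp]
      rw [heq]
      funext x
      have hp : HasDerivAt (fun x : ℝ => Real.log ((Real.sqrt (2 * π))⁻¹) + -x ^ 2 / 2) (-x) x := by
        have := (((hasDerivAt_pow 2 x).neg).div_const 2).const_add
          (Real.log ((Real.sqrt (2 * π))⁻¹))
        simp only [Nat.cast_ofNat, pow_one] at this
        exact this.congr_deriv (by norm_num; ring)
      exact hp.deriv
    have hcalc : (∫ x, (deriv (fun y => Real.log (stdNormalDensity y)) x -
          deriv (fun y => Real.log (f y / Z)) x) ^ 2 * stdNormalDensity x)
        = ∫ x, (sfun R x) ^ 2 * stdNormalDensity x := by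
      simp only [hp_deriv, hscore]
      congr 1
      funext x
      ring
    rw [hcalc]
    -- bound the integral
    set B : ℝ → ℝ := indicator (Ioi R) (fun x => 36 * Real.exp (-x)) with hBdef
    have hB_int : Integrable B := by
      rw [hBdef, integrable_indicator_iff measurableSet_Ioi]
      have := (exp_neg_integrableOn_Ioi R (by norm_num : (0:ℝ) < 1)).const_mul 36
      simpa [IntegrableOn] using this
    have hbd : ∀ x, (sfun R x) ^ 2 * stdNormalDensity x ≤ B x := by
      intro x
      rcases le_or_gt x R with hx | hx
      · have hs0 : sfun R x = 0 := by
          unfold sfun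
          rw [relu_of_nonpos (by linarith), relu_of_nonpos (by linarith)]
          ring
        rw [hs0, hBdef, indicator_of_notMem (by simpa using hx)]
        simp
      · rw [hBdef, indicator_of_mem (by exact hx)]
        have hs1 : 0 ≤ sfun R x := by
          unfold sfun
          have := relu_mono (show x - 3 * R ≤ x - R by linarith)
          linarith
        have hs2 : sfun R x ≤ 3 * x := by
          unfold sfun
          have h1 : relu (x - R) = x - R := relu_of_nonneg (by linarith)
          have h2 : 0 ≤ relu (x - 3 * R) := relu_nonneg _
          nlinarith
        have hsq : (sfun R x) ^ 2 ≤ 9 * x ^ 2 := by nlinarith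
        have hstd : stdNormalDensity x ≤ Real.exp (-x ^ 2 / 2) := by
          unfold stdNormalDensity
          have h1 := one_le_sqrt_two_pi
          have h2 : (Real.sqrt (2 * π))⁻¹ ≤ 1 := by
            rw [inv_le_one_iff₀]; right; exact h1
          nlinarith [Real.exp_pos (-x ^ 2 / 2)]
        have hx4 : 4 < x := lt_of_le_of_lt hR4 hx
        have hexpsq : 9 * x ^ 2 ≤ 36 * Real.exp x := by
          have h1 := Real.add_one_le_exp (x / 2)
          have h2 : Real.exp (x / 2) * Real.exp (x / 2) = Real.exp x := by
            rw [← Real.exp_add]; ring_nf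
          nlinarith [Real.exp_pos (x / 2)]
        calc (sfun R x) ^ 2 * stdNormalDensity x
            ≤ 9 * x ^ 2 * Real.exp (-x ^ 2 / 2) := by
              refine mul_le_mul hsq hstd (std_nonneg x) (by positivity)
          _ ≤ 36 * Real.exp x * Real.exp (-x ^ 2 / 2) := by
              nlinarith [Real.exp_pos (-x ^ 2 / 2)]
          _ = 36 * Real.exp (x + -x ^ 2 / 2) := by rw [Real.exp_add]; ring
          _ ≤ 36 * Real.exp (-x) := by
              have : x + -x ^ 2 / 2 ≤ -x := by nlinarith
              nlinarith [Real.exp_le_exp.mpr this]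
    have hint1 : Integrable (fun x => (sfun R x) ^ 2 * stdNormalDensity x) := by
      refine hB_int.mono (((continuous_sfun R).pow 2).mul continuous_std).aestronglyMeasurable
        (Filter.Eventually.of_forall fun x => ?_)
      rw [Real.norm_eq_abs, Real.norm_eq_abs,
        abs_of_nonneg (mul_nonneg (by positivity) (std_nonneg x))]
      · calc (sfun R x) ^ 2 * stdNormalDensity x ≤ B x := hbd x
          _ ≤ |B x| := le_abs_self _
    have hBint_val : (∫ x, B x) = 36 * Real.exp (-R) := by
      rw [hBdef, integral_indicator measurableSet_Ioi, integral_const_mul,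
        integral_exp_neg_Ioi]
    calc (∫ x, (sfun R x) ^ 2 * stdNormalDensity x) ≤ ∫ x, B x :=
          integral_mono hint1 hB_int hbd
      _ = 36 * Real.exp (-R) := hBint_val
      _ < 36 * (ε / 36) := by nlinarith
      _ = ε := by ring
  · -- TV distance
    set μ := densMeasureR stdNormalDensity with hμdef
    set ν := densMeasureR fun x => f x / Z with hνdef
    have hq_nonneg : ∀ x, 0 ≤ f x / Z := fun x => div_nonneg (ffun_pos R x).le hZpos.le
    have hq_int : Integrable (fun x => f x / Z) := hint_f.div_const Z
    have hμA : (μ (Ici (3 * R))).toReal = ∫ x in Ici (3 * R), stdNormalDensity x :=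
      densMeasure_apply_toReal integrable_std std_nonneg measurableSet_Ici
    have hνA : (ν (Ici (3 * R))).toReal = I_A / Z := by
      rw [hνdef, densMeasure_apply_toReal hq_int hq_nonneg measurableSet_Ici, integral_div]
    -- bound p(A)
    have hpA : (∫ x in Ici (3 * R), stdNormalDensity x) ≤ Real.exp (-R) := by
      have hmono : (∫ x in Ici (3 * R), stdNormalDensity x) ≤ ∫ x in Ici (3 * R), Real.exp (-x) := by
        refine setIntegral_mono_on integrable_std.integrableOn ?_ measurableSet_Ici ?_
        · rw [integrableOn_Ici_iff_integrableOn_Ioi]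
          have := exp_neg_integrableOn_Ioi (3 * R) (by norm_num : (0:ℝ) < 1)
          simpa using this
        · intro x hx
          have hx3 : 3 * R ≤ x := hx
          unfold stdNormalDensity
          have h2 : (Real.sqrt (2 * π))⁻¹ ≤ 1 := by
            rw [inv_le_one_iff₀]; right; exact one_le_sqrt_two_pi
          have h3 : Real.exp (-x ^ 2 / 2) ≤ Real.exp (-x) :=
            Real.exp_le_exp.mpr (by nlinarith)
          nlinarith [Real.exp_pos (-x ^ 2 / 2)]
      have : (∫ x in Ici (3 * R), Real.exp (-x)) = Real.exp (-(3 * R)) := by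
        rw [integral_Ici_eq_integral_Ioi, integral_exp_neg_Ioi]
      rw [this] at hmono
      have : Real.exp (-(3 * R)) ≤ Real.exp (-R) := Real.exp_le_exp.mpr (by linarith)
      linarith
    -- bound I_B / Z
    have hIBZ : I_B / Z < ε / 2 := by
      have h1 : I_B / Z ≤ I_B / Real.exp (6 * R ^ 2) := by
        apply div_le_div_of_nonneg_left hIB0 (Real.exp_pos _)
        linarith
      have hnum : Real.sqrt (2 * π) + 2 * R * Real.exp (3/2 * R ^ 2)
          ≤ 18 * Real.exp (6 * R ^ 2 - R) := by
        have hsq3 := sqrt_two_pi_le_three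
        have hsplit2 : Real.exp (6 * R ^ 2 - R) =
            Real.exp (3/2 * R ^ 2) * Real.exp (9/2 * R ^ 2 - R) := by
          rw [← Real.exp_add]; ring_nf
        have hb : 2 * R ≤ Real.exp (9/2 * R ^ 2 - R) := by
          have := Real.add_one_le_exp (9/2 * R ^ 2 - R)
          nlinarith
        have ha : 1 ≤ Real.exp (3/2 * R ^ 2) := Real.one_le_exp (by positivity)
        rw [hsplit2]
        nlinarith [Real.exp_pos (3/2 * R ^ 2), Real.exp_pos (9/2 * R ^ 2 - R)]
      have h2 : I_B / Real.exp (6 * R ^ 2) ≤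
          18 * Real.exp (6 * R ^ 2 - R) / Real.exp (6 * R ^ 2) := by
        rw [div_le_div_iff₀ (Real.exp_pos _) (Real.exp_pos _)]
        nlinarith [Real.exp_pos (6 * R ^ 2)]
      have h3 : 18 * Real.exp (6 * R ^ 2 - R) / Real.exp (6 * R ^ 2) = 18 * Real.exp (-R) := by
        rw [mul_div_assoc, ← Real.exp_sub]
        ring_nf
      have h4 : 18 * Real.exp (-R) < 18 * (ε / 36) := by nlinarith
      calc I_B / Z ≤ I_B / Real.exp (6 * R ^ 2) := h1
        _ ≤ 18 * Real.exp (6 * R ^ 2 - R) / Real.exp (6 * R ^ 2) := h2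
        _ = 18 * Real.exp (-R) := h3
        _ < 18 * (ε / 36) := h4
        _ = ε / 2 := by ring
    have hIAZ : I_A / Z = 1 - I_B / Z := by
      field_simp
      linarith [hsplit]
    have hgap : 1 - ε < (ν (Ici (3 * R))).toReal - (μ (Ici (3 * R))).toReal := by
      rw [hνA, hμA, hIAZ]
      have h36 : Real.exp (-R) < ε / 36 := hexpR
      linarith
    have habs : 1 - ε < |(μ (Ici (3 * R))).toReal - (ν (Ici (3 * R))).toReal| := by
      refine lt_of_lt_of_le hgap ?_
      rw [abs_sub_comm]
      exact le_abs_self _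
    have hbdd : BddAbove (Set.range fun A : { A : Set ℝ // MeasurableSet A } =>
        |(μ A.1).toReal - (ν A.1).toReal|) := by
      refine ⟨(μ Set.univ).toReal + (ν Set.univ).toReal, ?_⟩
      rintro y ⟨⟨A, hA⟩, rfl⟩
      have ha : (μ A).toReal ≤ (μ Set.univ).toReal :=
        ENNReal.toReal_mono (densMeasure_lt_top integrable_std std_nonneg Set.univ)
          (measure_mono (subset_univ A))
      have hb : (ν A).toReal ≤ (ν Set.univ).toReal :=
        ENNReal.toReal_mono (densMeasure_lt_top hq_int hq_nonneg Set.univ)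
          (measure_mono (subset_univ A))
      have h0a : (0:ℝ) ≤ (μ A).toReal := ENNReal.toReal_nonneg
      have h0b : (0:ℝ) ≤ (ν A).toReal := ENNReal.toReal_nonneg
      have h0au : (0:ℝ) ≤ (μ Set.univ).toReal := ENNReal.toReal_nonneg
      have h0bu : (0:ℝ) ≤ (ν Set.univ).toReal := ENNReal.toReal_nonneg
      simp only []
      rw [abs_le]
      constructor <;> linarith
    refine lt_of_lt_of_le habs ?_
    rw [TVdistR]
    exact le_ciSup hbdd ⟨Ici (3 * R), measurableSet_Ici⟩
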